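/- Let S be a bounded selfadjoint operator on a complex Hilbert space K with Sp(S) ⊆ [r, R], r < R, and f : [r, R] → ℝ continuous convex. Then for every unit vector x ∈ K, 0 ≤ ⟨f(S) x, x⟩ − f(⟨S x, x⟩) ≤ ((R − ⟨S x, x⟩)(⟨S x, x⟩ − r)/(R − r))·Ψ_f(⟨S x, x⟩; r, R) whenever ⟨S x, x⟩ ∈ (r, R), where Ψ_f(t; r, R) = (f(R) − f(t))/(R − t) − (f(t) − f(r))/(t − r). -/

import Mathlib

open scoped InnerProductSpace

/-- Existence of a subgradient for a convex function at an interior point. -/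
lemma convexOn_exists_subgradient {r R m : ℝ} {f : ℝ → ℝ}
    (hf : ConvexOn ℝ (Set.Icc r R) f) (hrm : r < m) (hmR : m < R) :
    ∃ c : ℝ, ∀ t ∈ Set.Icc r R, f m + c * (t - m) ≤ f t := by
  have hmI : m ∈ Set.Icc r R := ⟨hrm.le, hmR.le⟩
  set sl : Set ℝ := (fun t => (f m - f t) / (m - t)) '' Set.Ico r m with hsl
  have hne : sl.Nonempty := ⟨_, ⟨r, ⟨le_refl r, hrm⟩, rfl⟩⟩
  have hbdd : BddAbove sl := by
    refine ⟨(f R - f m) / (R - m), ?_⟩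
    rintro _ ⟨t, ht, rfl⟩
    exact hf.slope_mono_adjacent ⟨ht.1, (ht.2.trans hmR).le⟩ ⟨hrm.le.trans hmR.le, le_refl R⟩
      ht.2 hmR
  refine ⟨sSup sl, fun t ht => ?_⟩
  rcases lt_trichotomy t m with h | h | h
  · have h1 : (f m - f t) / (m - t) ≤ sSup sl := le_csSup hbdd ⟨t, ⟨ht.1, h⟩, rfl⟩
    have h2 : 0 < m - t := by linarith
    rw [div_le_iff₀ h2] at h1
    nlinarith
  · subst h; simp
  · have h1 : sSup sl ≤ (f t - f m) / (t - m) := by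
      refine csSup_le hne ?_
      rintro _ ⟨s, hs, rfl⟩
      exact hf.slope_mono_adjacent ⟨hs.1, (hs.2.trans hmR).le⟩ ⟨(hrm.trans h).le, ht.2⟩ hs.2 h
    have h2 : 0 < t - m := by linarith
    rw [le_div_iff₀ h2] at h1
    nlinarith

/-- cfc of an affine function on a selfadjoint operator. -/
lemma cfc_affine {K : Type*} [NormedAddCommGroup K] [InnerProductSpace ℂ K] [CompleteSpace K]
    (S : K →L[ℂ] K) (hS : IsSelfAdjoint S) (a b : ℝ) :
    cfc (fun t : ℝ => a + b * t) S = algebraMap ℝ (K →L[ℂ] K) a + b • S := by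
  rw [cfc_add (a := S) (fun _ => a) (fun t => b * t), cfc_const a S hS,
    cfc_const_mul b (fun t : ℝ => t) S (by fun_prop), cfc_id' ℝ S hS]

lemma inner_affine_re {K : Type*} [NormedAddCommGroup K] [InnerProductSpace ℂ K]
    [CompleteSpace K] (S : K →L[ℂ] K) (a b : ℝ) (x : K) (hx : ‖x‖ = 1) :
    (⟪(algebraMap ℝ (K →L[ℂ] K) a + b • S) x, x⟫_ℂ).re = a + b * (⟪S x, x⟫_ℂ).re := by
  have h1 : (algebraMap ℝ (K →L[ℂ] K) a) x = (a : ℂ) • x := by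
    rw [Algebra.algebraMap_eq_smul_one]
    simp [ContinuousLinearMap.smul_apply, Complex.coe_smul]
  have hxx : ⟪x, x⟫_ℂ = 1 := by
    rw [inner_self_eq_norm_sq_to_K, hx]; norm_num
  rw [ContinuousLinearMap.add_apply, inner_add_left, h1, ContinuousLinearMap.smul_apply,
    Complex.add_re]
  congr 1
  · rw [inner_smul_left, hxx, Complex.conj_ofReal]
    simp
  · rw [← Complex.coe_smul, inner_smul_left, Complex.conj_ofReal]
    simp

theorem cfc_jensen_defect_slope_bound
    {K : Type*} [NormedAddCommGroup K] [InnerProductSpace ℂ K] [CompleteSpace K]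
    (S : K →L[ℂ] K) (hS : IsSelfAdjoint S) (r R : ℝ) (hrR : r < R)
    (hspec : spectrum ℝ S ⊆ Set.Icc r R)
    (f : ℝ → ℝ) (hfc : ContinuousOn f (Set.Icc r R))
    (hf : ConvexOn ℝ (Set.Icc r R) f)
    (x : K) (hx : ‖x‖ = 1) (hm : (⟪S x, x⟫_ℂ).re ∈ Set.Ioo r R) :
    0 ≤ (⟪(cfc f S) x, x⟫_ℂ).re - f ((⟪S x, x⟫_ℂ).re) ∧
    (⟪(cfc f S) x, x⟫_ℂ).re - f ((⟪S x, x⟫_ℂ).re) ≤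
      ((R - (⟪S x, x⟫_ℂ).re) * ((⟪S x, x⟫_ℂ).re - r) / (R - r)) *
        ((f R - f ((⟪S x, x⟫_ℂ).re)) / (R - (⟪S x, x⟫_ℂ).re) -
          (f ((⟪S x, x⟫_ℂ).re) - f r) / ((⟪S x, x⟫_ℂ).re - r)) := by
  set m : ℝ := (⟪S x, x⟫_ℂ).re with hmdef
  obtain ⟨hrm, hmR⟩ := hm
  have hfc' : ContinuousOn f (spectrum ℝ S) := hfc.mono hspec
  -- general fact: A ≤ B implies re ⟪A x, x⟫ ≤ re ⟪B x, x⟫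
  have key : ∀ A B : K →L[ℂ] K, A ≤ B → (⟪A x, x⟫_ℂ).re ≤ (⟪B x, x⟫_ℂ).re := by
    intro A B hAB
    have hpos : (B - A).IsPositive := (ContinuousLinearMap.le_def A B).mp hAB
    have := hpos.inner_nonneg_left x
    rw [ContinuousLinearMap.sub_apply, inner_sub_left] at this
    have := (Complex.le_def.mp this).1
    simp only [Complex.sub_re, Complex.zero_re] at this
    linarith
  constructor
  · -- lower bound via subgradient
    obtain ⟨c, hc⟩ := convexOn_exists_subgradient hf hrm hmR
    have hle : cfc (fun t : ℝ => (f m - c * m) + c * t) S ≤ cfc f S := by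
      refine cfc_mono (fun t ht => ?_) (by fun_prop) hfc'
      have := hc t (hspec ht)
      linarith [this]
    rw [cfc_affine S hS] at hle
    have := key _ _ hle
    rw [inner_affine_re S _ _ x hx] at this
    rw [← hmdef] at this
    linarith
  · -- upper bound via secant line
    have hRr : (0:ℝ) < R - r := by linarith
    set a : ℝ := (f r * R - f R * r) / (R - r) with ha
    set b : ℝ := (f R - f r) / (R - r) with hb
    have hAr : a + b * r = f r := by rw [ha, hb]; field_simp; ring
    have hAR : a + b * R = f R := by rw [ha, hb]; field_simp; ring
    have hsec : ∀ t ∈ Set.Icc r R, f t ≤ a + b * t := by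
      intro t ht
      rcases eq_or_lt_of_le ht.1 with h | h
      · rw [← h, hAr]
      rcases eq_or_lt_of_le ht.2 with h2 | h2
      · rw [h2, hAR]
      · have h3 := hf.slope_mono_adjacent (Set.left_mem_Icc.mpr hrR.le)
          (Set.right_mem_Icc.mpr hrR.le) h h2
        rw [div_le_div_iff₀ (by linarith) (by linarith)] at h3
        have h4 : f t ≤ (f r * R - f R * r + (f R - f r) * t) / (R - r) := by
          rw [le_div_iff₀ hRr]; nlinarith
        have h5 : a + b * t = (f r * R - f R * r + (f R - f r) * t) / (R - r) := by
          rw [ha, hb]; field_simp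
        linarith
    have hle : cfc f S ≤ cfc (fun t : ℝ => a + b * t) S := by
      refine cfc_mono (fun t ht => hsec t (hspec ht)) hfc' (by fun_prop)
    rw [cfc_affine S hS] at hle
    have h5 := key _ _ hle
    rw [inner_affine_re S _ _ x hx, ← hmdef] at h5
    -- arithmetic: a + b * m - f m = ((R-m)(m-r)/(R-r)) * Ψ
    have heq : a + b * m - f m =
        ((R - m) * (m - r) / (R - r)) * ((f R - f m) / (R - m) - (f m - f r) / (m - r)) := by
      have h1 : R - m ≠ 0 := by linarith
      have h2 : m - r ≠ 0 := by linarith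
      rw [ha, hb]
      field_simp
      ring
    linarith
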